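/- arXiv:2201.13136 — 2 statements merged into one kernel-verified Lean document; each statement's English description precedes it below -/
import Mathlib

section
/- Let X and Y be Hausdorff topological spaces such that the product X × Y is a normal topological space, and let M : X ⇉ Y be an upper semicontinuous correspondence with nonempty compact values whose graph gra(M) is a Gδ subset of X × Y. Then there exists a continuous function θ : X × Y → [0,1] such that gra(M) = {(x,y) ∈ X × Y : θ(x,y) = sup_{z ∈ Y} θ(x,z)}. -/
open Set

/-- The graph of a correspondence `M : X ⇉ Y`. -/
def corrGraph {X Y : Type*} (M : X → Set Y) : Set (X × Y) := {p | p.2 ∈ M p.1}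

/-- An usc correspondence with compact values into a Hausdorff space has closed graph. -/
lemma corrGraph_isClosed
    {X Y : Type*} [TopologicalSpace X] [TopologicalSpace Y] [T2Space Y]
    (M : X → Set Y) (hMcomp : ∀ x, IsCompact (M x))
    (hMusc : ∀ F : Set Y, IsClosed F → IsClosed {x | (M x ∩ F).Nonempty}) :
    IsClosed (corrGraph M) := by
  rw [← isOpen_compl_iff, isOpen_iff_mem_nhds]
  rintro ⟨x, y⟩ hp
  have hy : y ∉ M x := hp
  obtain ⟨V, W, hV, hW, hMV, hyW, hVW⟩ :=
    SeparatedNhds.of_isCompact_isCompact (hMcomp x) isCompact_singleton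
      (disjoint_singleton_right.2 hy)
  set C : Set X := {x' | (M x' ∩ Vᶜ).Nonempty} with hC
  have hCclosed : IsClosed C := hMusc _ hV.isClosed_compl
  have hxC : x ∉ C := by
    rintro ⟨z, hzM, hzV⟩
    exact hzV (hMV hzM)
  have hmem : Cᶜ ×ˢ W ∈ nhds (x, y) :=
    (hCclosed.isOpen_compl.prod hW).mem_nhds ⟨hxC, hyW (mem_singleton y)⟩
  filter_upwards [hmem] with q hq hgra
  rcases hq with ⟨hq1, hq2⟩
  have : q.2 ∈ V := by
    by_contra h
    exact hq1 ⟨q.2, hgra, h⟩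
  exact (hVW.le_bot ⟨this, hq2⟩ : _)

/-- If `X × Y` is normal and `M : X ⇉ Y` is an upper semicontinuous correspondence with
nonempty compact values whose graph is a `Gδ` subset of `X × Y`, then there is a
continuous function `θ : X × Y → [0,1]` such that
`gra M = {(x,y) : θ (x,y) = sup_{z ∈ Y} θ (x,z)}`. -/
theorem inverse_maximum_normal_product
    {X Y : Type*} [TopologicalSpace X] [T2Space X] [TopologicalSpace Y] [T2Space Y]
    [NormalSpace (X × Y)]
    (M : X → Set Y) (hMne : ∀ x, (M x).Nonempty) (hMcomp : ∀ x, IsCompact (M x))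
    (hMusc : ∀ F : Set Y, IsClosed F → IsClosed {x | (M x ∩ F).Nonempty})
    (hGδ : ∃ U : ℕ → Set (X × Y), (∀ n, IsOpen (U n)) ∧ corrGraph M = ⋂ n, U n) :
    ∃ θ : X × Y → ℝ, Continuous θ ∧ (∀ p, θ p ∈ Icc (0 : ℝ) 1) ∧
      corrGraph M = {p : X × Y | θ p = sSup (range fun z => θ (p.1, z))} := by
  obtain ⟨U, hUopen, hUeq⟩ := hGδ
  have hGsub : ∀ n, corrGraph M ⊆ U n := by
    intro n
    rw [hUeq]; exact iInter_subset U n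
  have hGclosed : IsClosed (corrGraph M) := corrGraph_isClosed M hMcomp hMusc
  -- Urysohn functions
  have hsep : ∀ n : ℕ, ∃ f : C(X × Y, ℝ), EqOn f 0 (U n)ᶜ ∧ EqOn f 1 (corrGraph M) ∧
      ∀ p, f p ∈ Icc (0 : ℝ) 1 := fun n =>
    exists_continuous_zero_one_of_isClosed (hUopen n).isClosed_compl hGclosed
      (disjoint_compl_left_iff_subset.2 (hGsub n))
  choose f hf0 hf1 hf01 using hsep
  -- the geometric weights
  set g : ℕ → ℝ := fun n => (1 / 2 : ℝ) ^ (n + 1) with hg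
  have hgpos : ∀ n, 0 < g n := fun n => by positivity
  have hgsummable : Summable g := by
    have := (summable_geometric_of_lt_one (by norm_num) (by norm_num : (1/2 : ℝ) < 1))
    simpa [hg, pow_succ'] using this.mul_left (1/2 : ℝ)
  have hgsum : ∑' n, g n = 1 := by
    have h := tsum_geometric_of_lt_one (by norm_num : (0:ℝ) ≤ 1/2) (by norm_num)
    have : ∑' n, g n = (1/2 : ℝ) * ∑' n, (1/2 : ℝ) ^ n := by
      rw [← tsum_mul_left]; congr 1; ext n; rw [hg]; ring
    rw [this, h]; norm_num
  set θ : X × Y → ℝ := fun p => ∑' n, g n * f n p with hθ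
  have hterm_nonneg : ∀ p n, 0 ≤ g n * f n p := fun p n =>
    mul_nonneg (hgpos n).le (hf01 n p).1
  have hterm_le : ∀ p n, g n * f n p ≤ g n := fun p n => by
    nlinarith [(hf01 n p).2, (hgpos n).le]
  have hsummable : ∀ p, Summable fun n => g n * f n p := fun p =>
    Summable.of_nonneg_of_le (hterm_nonneg p) (hterm_le p) hgsummable
  have hθ_le_one : ∀ p, θ p ≤ 1 := by
    intro p
    calc θ p ≤ ∑' n, g n := Summable.tsum_le_tsum (hterm_le p) (hsummable p) hgsummable
    _ = 1 := hgsum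
  have hθ_nonneg : ∀ p, 0 ≤ θ p := fun p => tsum_nonneg (hterm_nonneg p)
  have hθcont : Continuous θ := by
    apply continuous_tsum (fun n => (continuous_const.mul (f n).continuous)) hgsummable
    intro n p
    rw [Real.norm_eq_abs, show (((fun _ => (1/2:ℝ)^(n+1)) * ⇑(f n) : X × Y → ℝ)) p = g n * f n p from rfl, abs_of_nonneg (hterm_nonneg p n)]
    exact hterm_le p n
  -- θ = 1 on the graph
  have hθ_graph : ∀ p ∈ corrGraph M, θ p = 1 := by
    intro p hp
    have : ∀ n, g n * f n p = g n := by
      intro n; rw [hf1 n hp]; simp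
    rw [hθ]; simp only [this]; exact hgsum
  -- θ < 1 off the graph
  have hθ_lt : ∀ p ∉ corrGraph M, θ p < 1 := by
    intro p hp
    have : ∃ n, p ∉ U n := by
      by_contra h
      push_neg at h
      exact hp (hUeq ▸ mem_iInter.2 h)
    obtain ⟨n, hn⟩ := this
    have hfn : f n p = 0 := hf0 n hn
    have hlt : g n * f n p < g n := by rw [hfn]; simpa using hgpos n
    calc θ p < ∑' n, g n :=
          Summable.tsum_lt_tsum_of_nonneg (hterm_nonneg p) (hterm_le p) hlt hgsummable
    _ = 1 := hgsum
  -- the sup over z equals 1 for each x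
  have hsup : ∀ x : X, sSup (range fun z => θ (x, z)) = 1 := by
    intro x
    obtain ⟨z₀, hz₀⟩ := hMne x
    have h1 : (1 : ℝ) ∈ range fun z => θ (x, z) :=
      ⟨z₀, hθ_graph (x, z₀) hz₀⟩
    have hbdd : ∀ r ∈ range fun z => θ (x, z), r ≤ 1 := by
      rintro r ⟨z, rfl⟩; exact hθ_le_one (x, z)
    exact le_antisymm (csSup_le ⟨1, h1⟩ hbdd) (le_csSup ⟨1, hbdd⟩ h1)
  refine ⟨θ, hθcont, fun p => ⟨hθ_nonneg p, hθ_le_one p⟩, ?_⟩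
  ext p
  simp only [mem_setOf_eq, hsup p.1]
  constructor
  · exact hθ_graph p
  · intro h
    by_contra hp
    exact absurd h (ne_of_lt (hθ_lt p hp))
end

section
/- Let (X, d_X) and (Y, d_Y) be metric spaces and M : X ⇉ Y a correspondence with nonempty values whose graph gra(M) is a closed subset of X × Y (equipped with the metric d((x,y),(u,v)) = d_X(x,u) + d_Y(y,v), which induces the product topology). Then there exists a continuous function θ : X × Y → [0,1] such that for every x ∈ X, M(x) = {y ∈ Y : θ(x,y) = sup_{z ∈ Y} θ(x,z)}. -/
open Set

/-- If `X`, `Y` are metric spaces and `M : X ⇉ Y` has nonempty values and closed graph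
(in the product, whose topology is induced by the sum metric
`d((x,y),(u,v)) = d_X(x,u) + d_Y(y,v)`), then there exists a continuous
`θ : X × Y → [0,1]` such that `M x = {y : θ (x,y) = sup_{z ∈ Y} θ (x,z)}` for all `x`. -/
theorem inverse_maximum_metric
    {X Y : Type*} [MetricSpace X] [MetricSpace Y]
    (M : X → Set Y) (hMne : ∀ x, (M x).Nonempty)
    (hclosed : IsClosed (corrGraph M)) :
    ∃ θ : X × Y → ℝ, Continuous θ ∧ (∀ p, θ p ∈ Icc (0 : ℝ) 1) ∧
      ∀ x, M x = {y : Y | θ (x, y) = sSup (range fun z => θ (x, z))} := by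
  classical
  set G := corrGraph M with hG
  have hbd : ∀ p : X × Y, 0 ≤ min 1 (Metric.infDist p G) ∧ min 1 (Metric.infDist p G) ≤ 1 :=
    fun p => ⟨le_min (by norm_num) Metric.infDist_nonneg, min_le_left _ _⟩
  refine ⟨fun p => 1 - min 1 (Metric.infDist p G), ?_, ?_, ?_⟩
  · exact continuous_const.sub (continuous_const.min (Metric.continuous_infDist_pt G))
  · intro p
    obtain ⟨h1, h2⟩ := hbd p
    exact ⟨by simp only; linarith, by simp only; linarith⟩
  · intro x
    obtain ⟨y₀, hy₀⟩ := hMne x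
    have : Nonempty Y := ⟨y₀⟩
    have hGne : G.Nonempty := ⟨(x, y₀), hy₀⟩
    have hmem : ∀ y : Y, (x, y) ∈ G ↔ Metric.infDist (x, y) G = 0 := fun y =>
      hclosed.mem_iff_infDist_zero hGne
    have hub : ∀ r ∈ range (fun z : Y => 1 - min 1 (Metric.infDist (x, z) G)), r ≤ 1 := by
      rintro _ ⟨z, rfl⟩
      have := (hbd (x, z)).1
      simp only
      linarith
    have hy00 : Metric.infDist (x, y₀) G = 0 := (hmem y₀).1 hy₀
    have hsup : sSup (range fun z : Y => 1 - min 1 (Metric.infDist (x, z) G)) = 1 := by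
      apply le_antisymm
      · exact csSup_le (range_nonempty _) hub
      · exact le_csSup ⟨1, hub⟩ ⟨y₀, by simp [hy00]⟩
    ext y
    simp only [mem_setOf_eq, hsup]
    constructor
    · intro hy
      have hy0 : Metric.infDist (x, y) G = 0 := (hmem y).1 hy
      simp [hy0]
    · intro h
      have h0 : min 1 (Metric.infDist (x, y) G) = 0 := by linarith
      have : Metric.infDist (x, y) G = 0 := by
        rcases min_eq_iff.1 h0 with ⟨h1, _⟩ | ⟨h2, _⟩
        · norm_num at h1
        · exact h2
      exact (hmem y).2 this
end
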